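/- Let $\omega$ be a primitive $N$-th root of unity in an algebraically closed field $k$ of characteristic zero, with $N > 1$ odd, and set $\xi = \omega^{(N+1)/2}$ (so $\xi^2 = \omega$). Then the second indicator of the Taft algebra satisfies $\nu_2(T_{N^2}(\omega)) = \sum_{i=0}^{N-1} (-\xi^{-1})^i = \frac{2}{1 + \omega^{-(N+1)/2}}$, where $\nu_2(T_{N^2}(\omega)) = \mathrm{Trace}(S)$ is the trace of the antipode. -/

import Mathlib

open TensorProduct Finset

section HopfGeneral

open Coalgebra HopfAlgebra

variable {R : Type*} {A : Type*} [CommSemiring R] [Semiring A] [HopfAlgebra R A]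

/-- A representation of a product from representations of the factors. -/
noncomputable def Coalgebra.Repr.mul' {a b : A} {ι κ : Type*} (ra : Coalgebra.Repr R a ι)
    (rb : Coalgebra.Repr R b κ) : Coalgebra.Repr R (a * b) (ι × κ) where
  index := ra.index ×ˢ rb.index
  left p := ra.left p.1 * rb.left p.2
  right p := ra.right p.1 * rb.right p.2
  eq := by
    rw [Bialgebra.comul_mul, ← ra.eq, ← rb.eq, Finset.sum_mul_sum, Finset.sum_product]
    simp [Algebra.TensorProduct.tmul_mul_tmul]

lemma Coalgebra.sum_smul_counit {a : A} {ι : Type*} (ra : Coalgebra.Repr R a ι) :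
    ∑ i ∈ ra.index, counit (R := R) (ra.right i) • ra.left i = a := by
  calc ∑ i ∈ ra.index, counit (R := R) (ra.right i) • ra.left i
      = (_root_.TensorProduct.rid R A).toLinearMap
          (∑ i ∈ ra.index, ra.left i ⊗ₜ[R] counit (R := R) (ra.right i)) := by
        rw [map_sum]
        exact Finset.sum_congr rfl fun i _ => rfl
    _ = (_root_.TensorProduct.rid R A).toLinearMap (a ⊗ₜ[R] (1 : R)) := by
        rw [Coalgebra.sum_tmul_counit_eq ra]
    _ = a := by simp

lemma HopfAlgebra.antipode_left_tensor_id {a : A} {ι : Type*} {κ : ι → Type*}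
    (ra : Coalgebra.Repr R a ι)
    (a₂ : ∀ i, Coalgebra.Repr R (ra.right i) (κ i)) :
    ∑ i ∈ ra.index, ∑ m ∈ (a₂ i).index,
      (antipode (R := R) (ra.left i) * (a₂ i).left m) ⊗ₜ[R] (a₂ i).right m
      = (1 : A) ⊗ₜ[R] a := by
  classical
  have h := Coalgebra.sum_tmul_tmul_eq ra (fun i => ℛ R (ra.left i)) a₂
  set Φ : A ⊗[R] (A ⊗[R] A) →ₗ[R] A ⊗[R] A :=
    (LinearMap.mul' R A).rTensor A ∘ₗ (TensorProduct.assoc R A A A).symm.toLinearMap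
      ∘ₗ (antipode (R := R)).rTensor (A ⊗[R] A) with hΦ
  have hΦt : ∀ u v w : A, Φ (u ⊗ₜ[R] (v ⊗ₜ[R] w)) = (antipode (R := R) u * v) ⊗ₜ[R] w := by
    intro u v w
    simp [hΦ, TensorProduct.assoc_symm_tmul]
  have h2 : Φ _ = Φ _ := congrArg Φ h
  simp only [map_sum, hΦt] at h2
  rw [← h2]
  calc ∑ i ∈ ra.index, ∑ j ∈ (ℛ R (ra.left i)).index,
        (antipode (R := R) ((ℛ R (ra.left i)).left j) * (ℛ R (ra.left i)).right j) ⊗ₜ[R] ra.right i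
      = ∑ i ∈ ra.index, (counit (R := R) (ra.left i) • (1:A)) ⊗ₜ[R] ra.right i := by
        refine Finset.sum_congr rfl fun i _ => ?_
        rw [← TensorProduct.sum_tmul, HopfAlgebra.sum_antipode_mul_eq_smul]
    _ = (1 : A) ⊗ₜ[R] ∑ i ∈ ra.index, counit (R := R) (ra.left i) • ra.right i := by
        rw [TensorProduct.tmul_sum]
        refine Finset.sum_congr rfl fun i _ => ?_
        rw [TensorProduct.smul_tmul, TensorProduct.tmul_smul]
    _ = (1 : A) ⊗ₜ[R] a := by rw [Coalgebra.sum_counit_smul]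

@[simp]
lemma HopfAlgebra.antipode_one' : antipode (R := R) (1 : A) = 1 := by
  have h := HopfAlgebra.mul_antipode_rTensor_comul_apply (R := R) (A := A) 1
  rw [Bialgebra.comul_one, Bialgebra.counit_one] at h
  rw [Algebra.TensorProduct.one_def] at h
  simpa using h

theorem HopfAlgebra.antipode_mul' (a b : A) :
    antipode (R := R) (a * b) = antipode (R := R) b * antipode (R := R) a := by
  classical
  set S : A →ₗ[R] A := antipode (R := R) with hS
  set ra := ℛ R a
  set rb := ℛ R b
  set a₂ : ∀ i, Coalgebra.Repr R (ra.right i) (A × A) := fun i => ℛ R (ra.right i)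
  set b₂ : ∀ j, Coalgebra.Repr R (rb.right j) (A × A) := fun j => ℛ R (rb.right j)
  have E1 := HopfAlgebra.antipode_left_tensor_id ra a₂
  have E2 := HopfAlgebra.antipode_left_tensor_id rb b₂
  -- the bilinear map φ
  set φbil : A →ₗ[R] A →ₗ[R] A := LinearMap.mk₂ R
    (fun v w => ∑ j ∈ rb.index, ∑ n ∈ (b₂ j).index,
      S (rb.left j) * v * (b₂ j).left n * S (w * (b₂ j).right n))
    (by intro v v' w; simp [mul_add, add_mul, Finset.sum_add_distrib])
    (by intro c v w; simp [Finset.smul_sum, smul_mul_assoc, mul_smul_comm])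
    (by intro v w w'; simp [mul_add, add_mul, map_add, Finset.sum_add_distrib])
    (by intro c v w; simp [Finset.smul_sum, smul_mul_assoc, mul_smul_comm, map_smul])
    with hφbil
  set φ : A ⊗[R] A →ₗ[R] A := TensorProduct.lift φbil with hφ
  have hφt : ∀ v w : A, φ (v ⊗ₜ[R] w) = ∑ j ∈ rb.index, ∑ n ∈ (b₂ j).index,
      S (rb.left j) * v * (b₂ j).left n * S (w * (b₂ j).right n) := by
    intro v w; simp [hφ, hφbil]
  -- the map ψ
  set ψ : A ⊗[R] A →ₗ[R] A :=
    LinearMap.mul' R A ∘ₗ (S ∘ₗ LinearMap.mulLeft R a).lTensor A with hψ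
  have hψt : ∀ v w : A, ψ (v ⊗ₜ[R] w) = v * S (a * w) := by
    intro v w; simp [hψ]
  -- Step 1 : φ (1 ⊗ a) = S (a * b)
  have step1 : φ ((1 : A) ⊗ₜ[R] a) = S (a * b) := by
    have h1 : φ ((1 : A) ⊗ₜ[R] a) =
        ψ (∑ j ∈ rb.index, ∑ n ∈ (b₂ j).index,
          (S (rb.left j) * (b₂ j).left n) ⊗ₜ[R] (b₂ j).right n) := by
      rw [hφt]
      simp only [map_sum, hψt, mul_one]
    rw [h1, E2, hψt, one_mul]
  -- Step 2 : φ applied to the LHS of E1 equals S b * S a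
  have step2 : φ (∑ i ∈ ra.index, ∑ m ∈ (a₂ i).index,
      (S (ra.left i) * (a₂ i).left m) ⊗ₜ[R] (a₂ i).right m) = S b * S a := by
    simp only [map_sum, hφt]
    -- now a quadruple sum
    calc ∑ i ∈ ra.index, ∑ m ∈ (a₂ i).index, ∑ j ∈ rb.index, ∑ n ∈ (b₂ j).index,
          S (rb.left j) * (S (ra.left i) * (a₂ i).left m) * (b₂ j).left n
            * S ((a₂ i).right m * (b₂ j).right n)
        = ∑ i ∈ ra.index, ∑ j ∈ rb.index, (S (rb.left j) * S (ra.left i)) *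
            ∑ p ∈ ((a₂ i).mul' (b₂ j)).index,
              ((a₂ i).mul' (b₂ j)).left p * S (((a₂ i).mul' (b₂ j)).right p) := by
          refine Finset.sum_congr rfl fun i _ => ?_
          rw [Finset.sum_comm]
          refine Finset.sum_congr rfl fun j _ => ?_
          rw [Finset.mul_sum]
          show _ = ∑ p ∈ (a₂ i).index ×ˢ (b₂ j).index, _
          rw [Finset.sum_product]
          refine Finset.sum_congr rfl fun m _ => Finset.sum_congr rfl fun n _ => ?_
          show  S (rb.left j) * (S (ra.left i) * (a₂ i).left m) * (b₂ j).left n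
            * S ((a₂ i).right m * (b₂ j).right n) = S (rb.left j) * S (ra.left i) *
              ((a₂ i).left m * (b₂ j).left n * S ((a₂ i).right m * (b₂ j).right n))
          noncomm_ring
      _ = ∑ i ∈ ra.index, ∑ j ∈ rb.index, (S (rb.left j) * S (ra.left i)) *
            ((counit (R := R) (ra.right i * rb.right j)) • (1 : A)) := by
          refine Finset.sum_congr rfl fun i _ => Finset.sum_congr rfl fun j _ => ?_
          rw [HopfAlgebra.sum_mul_antipode_eq_smul]
      _ = (∑ j ∈ rb.index, counit (R := R) (rb.right j) • S (rb.left j)) *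
            (∑ i ∈ ra.index, counit (R := R) (ra.right i) • S (ra.left i)) := by
          rw [Finset.sum_mul_sum, Finset.sum_comm]
          refine Finset.sum_congr rfl fun i _ => Finset.sum_congr rfl fun j _ => ?_
          rw [Bialgebra.counit_mul, mul_smul_comm, mul_one, smul_mul_smul_comm, mul_comm]
      _ = S b * S a := by
          have hsum : ∀ (c : A) (rc : Coalgebra.Repr R c (A × A)),
              (∑ j ∈ rc.index, counit (R := R) (rc.right j) • S (rc.left j)) = S c := by
            intro c rc
            conv_rhs => rw [← Coalgebra.sum_smul_counit (R := R) rc]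
            rw [map_sum]
            exact Finset.sum_congr rfl fun i _ => (map_smul S _ _).symm
          rw [hsum b rb, hsum a ra]
  rw [← step1, ← E1, step2]

end HopfGeneral

/-- Let `k` be a field of characteristic zero with a primitive `N`-th root of unity `ω`,
`N > 1` odd, and let `H` be the Taft algebra `T_{N²}(ω)` (generators `g, x` with `g^N = 1`,
`x^N = 0`, `g x = ω x g`, `g` grouplike, `Δ(x) = x ⊗ 1 + g ⊗ x`, basis `{xⁱ gʲ}`).
Setting `ξ = ω^((N+1)/2)` (so `ξ² = ω`), the second indicator
`ν₂(T_{N²}(ω)) = Trace(S)` equals `∑_{i=0}^{N-1} (-ξ⁻¹)ⁱ = 2 / (1 + ω^{-(N+1)/2})`. -/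
theorem taft_second_indicator {k H : Type*} [Field k] [CharZero k]
    [Ring H] [HopfAlgebra k H] [FiniteDimensional k H]
    (N : ℕ) (hN : 1 < N) (hodd : Odd N) (ω : k) (hω : IsPrimitiveRoot ω N)
    (g x : H)
    (hg : g ^ N = 1) (hx : x ^ N = 0) (hgx : g * x = ω • (x * g))
    (hΔg : Coalgebra.comul (R := k) g = g ⊗ₜ[k] g)
    (hεg : Coalgebra.counit (R := k) g = 1)
    (hΔx : Coalgebra.comul (R := k) x = x ⊗ₜ[k] 1 + g ⊗ₜ[k] x)
    (hεx : Coalgebra.counit (R := k) x = 0)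
    (B : Module.Basis (Fin N × Fin N) k H)
    (hB : ∀ p : Fin N × Fin N, B p = x ^ (p.1 : ℕ) * g ^ (p.2 : ℕ)) :
    LinearMap.trace k H (HopfAlgebra.antipode (R := k))
        = ∑ i ∈ Finset.range N, (-(ω ^ ((N + 1) / 2))⁻¹) ^ i ∧
    LinearMap.trace k H (HopfAlgebra.antipode (R := k))
        = 2 / (1 + (ω ^ ((N + 1) / 2))⁻¹) := by
  classical
  have hN0 : 0 < N := by omega
  haveI : NeZero N := ⟨by omega⟩
  set S : H →ₗ[k] H := HopfAlgebra.antipode (R := k) with hSdef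
  set h : ℕ := (N + 1) / 2 with hh_def
  have h2h : 2 * h = N + 1 := by obtain ⟨m, hm⟩ := hodd; omega
  have hωN : ω ^ N = 1 := hω.pow_eq_one
  have hω0 : ω ≠ 0 := by
    intro h0; rw [h0, zero_pow hN0.ne'] at hωN; exact zero_ne_one hωN
  -- `g` and `ω` powers are `N`-periodic
  have gmod : ∀ a : ℕ, g ^ a = g ^ (a % N) := by
    intro a
    conv_lhs => rw [← Nat.div_add_mod a N]
    rw [pow_add, pow_mul, hg, one_pow, one_mul]
  have ωmod : ∀ a : ℕ, ω ^ a = ω ^ (a % N) := by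
    intro a
    conv_lhs => rw [← Nat.div_add_mod a N]
    rw [pow_add, pow_mul, hωN, one_pow, one_mul]
  -- antipode on g
  have hSg1 : S g * g = 1 := by
    have h1 := HopfAlgebra.mul_antipode_rTensor_comul_apply (R := k) g
    rw [hΔg, hεg] at h1
    simpa using h1
  have hgg : g * g ^ (N - 1) = 1 := by
    rw [← pow_succ', show N - 1 + 1 = N by omega, hg]
  have hSg : S g = g ^ (N - 1) := by
    calc S g = S g * (g * g ^ (N - 1)) := by rw [hgg, mul_one]
    _ = (S g * g) * g ^ (N - 1) := by rw [mul_assoc]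
    _ = g ^ (N - 1) := by rw [hSg1, one_mul]
  -- commutation relations
  have c1 : ∀ a : ℕ, g ^ a * x = (ω ^ a) • (x * g ^ a) := by
    intro a; induction a with
    | zero => simp
    | succ n ih =>
      calc g ^ (n + 1) * x = g ^ n * (g * x) := by rw [pow_succ, mul_assoc]
      _ = ω • (g ^ n * (x * g)) := by rw [hgx, mul_smul_comm]
      _ = ω • ((g ^ n * x) * g) := by rw [mul_assoc]
      _ = ω • ((ω ^ n • (x * g ^ n)) * g) := by rw [ih]
      _ = (ω ^ (n + 1)) • (x * g ^ (n + 1)) := by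
        rw [smul_mul_assoc, smul_smul, mul_assoc, ← pow_succ, ← pow_succ']
  have c2 : ∀ a i : ℕ, g ^ a * x ^ i = (ω ^ (a * i)) • (x ^ i * g ^ a) := by
    intro a i; induction i with
    | zero => simp
    | succ n ih =>
      calc g ^ a * x ^ (n + 1) = (g ^ a * x ^ n) * x := by rw [pow_succ, ← mul_assoc]
      _ = (ω ^ (a * n)) • (x ^ n * (g ^ a * x)) := by rw [ih, smul_mul_assoc, mul_assoc]
      _ = (ω ^ (a * n)) • (x ^ n * ((ω ^ a) • (x * g ^ a))) := by rw [c1 a]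
      _ = (ω ^ (a * (n + 1))) • (x ^ (n + 1) * g ^ a) := by
        rw [mul_smul_comm, smul_smul, ← pow_add,
          show a * n + a = a * (n + 1) by ring, ← mul_assoc, ← pow_succ]
  have c3 : ∀ i : ℕ, (x * g ^ (N - 1)) ^ i
      = (ω ^ ((N - 1) * (i * (i - 1) / 2))) • (x ^ i * g ^ ((N - 1) * i)) := by
    intro i; induction i with
    | zero => simp
    | succ n ih =>
      calc (x * g ^ (N - 1)) ^ (n + 1) = (x * g ^ (N - 1)) ^ n * (x * g ^ (N - 1)) :=
        pow_succ _ n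
      _ = (ω ^ ((N - 1) * (n * (n - 1) / 2))) •
            ((x ^ n * g ^ ((N - 1) * n)) * (x * g ^ (N - 1))) := by
        rw [ih, smul_mul_assoc]
      _ = (ω ^ ((N - 1) * (n * (n - 1) / 2))) •
            (x ^ n * ((g ^ ((N - 1) * n) * x) * g ^ (N - 1))) := by
        rw [mul_assoc, mul_assoc]
      _ = (ω ^ ((N - 1) * (n * (n - 1) / 2))) •
            (x ^ n * (((ω ^ ((N - 1) * n)) • (x * g ^ ((N - 1) * n))) * g ^ (N - 1))) := by
        rw [c1]
      _ = (ω ^ ((N - 1) * ((n + 1) * n / 2))) • (x ^ (n + 1) * g ^ ((N - 1) * (n + 1))) := by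
        rw [smul_mul_assoc, mul_smul_comm, smul_smul, ← pow_add,
          show (N - 1) * (n * (n - 1) / 2) + (N - 1) * n
              = (N - 1) * ((n + 1) * n / 2) by
            have evens' : ∀ m : ℕ, 2 ∣ (m + 1) * m := by
              intro m
              rw [mul_comm]
              exact (Nat.even_mul_succ_self m).two_dvd
            have : n * (n - 1) / 2 + n = (n + 1) * n / 2 := by
              cases n with
              | zero => rfl
              | succ p =>
                simp only [Nat.add_sub_cancel]
                apply Nat.eq_of_mul_eq_mul_left (show 0 < 2 by norm_num)
                rw [Nat.mul_add, Nat.mul_div_cancel' (evens' p),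
                  Nat.mul_div_cancel' (evens' (p + 1))]
                ring
            rw [← Nat.left_distrib, this]]
        rw [mul_assoc x (g ^ ((N-1)*n)) (g ^ (N-1)), ← pow_add,
          show (N-1)*n + (N-1) = (N-1)*(n+1) by ring, ← mul_assoc, ← pow_succ]
      _ = (ω ^ ((N - 1) * ((n + 1) * ((n + 1) - 1) / 2))) •
            (x ^ (n + 1) * g ^ ((N - 1) * (n + 1))) := by norm_num
  -- antipode on x
  have hSx : S x = (-(ω ^ (N - 1))) • (x * g ^ (N - 1)) := by
    have h1 := HopfAlgebra.mul_antipode_rTensor_comul_apply (R := k) x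
    rw [hΔx, hεx] at h1
    simp only [map_add, LinearMap.rTensor_tmul, LinearMap.mul'_apply, mul_one, map_zero] at h1
    rw [← hSdef] at h1
    have h2 : S x = -(S g * x) := by
      have := eq_neg_of_add_eq_zero_left h1
      simpa using this
    rw [h2, hSg, c1, neg_smul]
  have evens : ∀ m : ℕ, 2 ∣ m * (m - 1) := by
    intro m
    cases m with
    | zero => simp
    | succ p =>
      rw [Nat.succ_sub_one, mul_comm]
      exact (Nat.even_mul_succ_self p).two_dvd
  -- antipode of powers
  have Spow : ∀ (y : H) (n : ℕ), S (y ^ n) = (S y) ^ n := by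
    intro y n; induction n with
    | zero => simp only [pow_zero, hSdef, HopfAlgebra.antipode_one']
    | succ m ih =>
      rw [pow_succ, hSdef, HopfAlgebra.antipode_mul', ← hSdef, ih, ← pow_succ']
  have SxPow : ∀ i : ℕ, S (x ^ i)
      = (((-1 : k) ^ i) * ω ^ ((N - 1) * i + (N - 1) * (i * (i - 1) / 2))) •
        (x ^ i * g ^ ((N - 1) * i)) := by
    intro i
    rw [Spow, hSx, smul_pow, c3, smul_smul, neg_pow, mul_assoc, ← pow_mul, ← pow_add]
  have SB : ∀ i j : Fin N, S (B (i, j)) =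
      (((-1 : k) ^ (i : ℕ)) * ω ^ ((N - 1) * (i : ℕ) + (N - 1) * ((i : ℕ) * ((i : ℕ) - 1) / 2)
          + (N - 1) * (j : ℕ) * (i : ℕ))) •
        B (i, ⟨((N - 1) * (j : ℕ) + (N - 1) * (i : ℕ)) % N, Nat.mod_lt _ hN0⟩) := by
    intro i j
    rw [hB (i, j), hB (i, ⟨((N - 1) * (j : ℕ) + (N - 1) * (i : ℕ)) % N, Nat.mod_lt _ hN0⟩)]
    show S (x ^ (i : ℕ) * g ^ (j : ℕ)) = _
    rw [hSdef, HopfAlgebra.antipode_mul', ← hSdef, Spow g, hSg, ← pow_mul, SxPow,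
      mul_smul_comm, ← mul_assoc, c2 ((N - 1) * (j : ℕ)) (i : ℕ), smul_mul_assoc, smul_smul,
      mul_assoc (x ^ (i : ℕ)), ← pow_add, ← gmod]
    congr 1
    rw [pow_add, pow_add]
    ring
  -- modular arithmetic helpers
  have hcast : ∀ a b : ℕ, a < N → b < N → (((a : ℕ) : ZMod N) = ((b : ℕ) : ZMod N) ↔ a = b) := by
    intro a b ha hb
    rw [ZMod.natCast_eq_natCast_iff', Nat.mod_eq_of_lt ha, Nat.mod_eq_of_lt hb]
  have hmodcast : ∀ a : ℕ, ((a % N : ℕ) : ZMod N) = ((a : ℕ) : ZMod N) := by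
    intro a
    rw [ZMod.natCast_eq_natCast_iff']
    exact Nat.mod_mod_of_dvd a dvd_rfl
  have hn0 : ((N : ℕ) : ZMod N) = 0 := ZMod.natCast_self N
  have hh2 : (2 : ZMod N) * ((h : ℕ) : ZMod N) = 1 := by
    have hc : ((2 * h : ℕ) : ZMod N) = ((N + 1 : ℕ) : ZMod N) := by rw [h2h]
    push_cast at hc
    rw [hc, hn0, zero_add]
  have hle1 : 1 ≤ N := hN0
  set js : Fin N → Fin N := fun i => ⟨((N - (i : ℕ)) * h) % N, Nat.mod_lt _ hN0⟩ with hjs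
  have condIff : ∀ i j : Fin N,
      (((N - 1) * (j : ℕ) + (N - 1) * (i : ℕ)) % N = (j : ℕ)) ↔ j = js i := by
    intro i j
    have hlei : (i : ℕ) ≤ N := le_of_lt i.isLt
    constructor
    · intro hc
      have hc' : ((((N - 1) * (j : ℕ) + (N - 1) * (i : ℕ)) : ℕ) : ZMod N)
          = (((j : ℕ) : ℕ) : ZMod N) := by
        rw [ZMod.natCast_eq_natCast_iff', hc, Nat.mod_eq_of_lt j.isLt]
      apply Fin.ext
      rw [← hcast _ _ j.isLt (Nat.mod_lt _ hN0)]
      show ((j : ℕ) : ZMod N) = (((N - (i : ℕ)) * h % N : ℕ) : ZMod N)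
      rw [hmodcast]
      push_cast [Nat.cast_sub hle1, Nat.cast_sub hlei] at hc' ⊢
      rw [hn0] at hc' ⊢
      linear_combination (-(((h : ℕ) : ZMod N))) * hc' + (-(((j : ℕ) : ZMod N))) * hh2
    · intro hc
      have hc' : (((j : ℕ) : ℕ) : ZMod N) = (((N - (i : ℕ)) * h % N : ℕ) : ZMod N) := by
        rw [hc]
      rw [hmodcast] at hc'
      have goalZ : ((((N - 1) * (j : ℕ) + (N - 1) * (i : ℕ)) : ℕ) : ZMod N)
          = (((j : ℕ) : ℕ) : ZMod N) := by
        push_cast [Nat.cast_sub hle1, Nat.cast_sub hlei] at hc' ⊢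
        rw [hn0] at hc' ⊢
        linear_combination (-2 : ZMod N) * hc' + (((i : ℕ) : ZMod N)) * hh2
      have := (ZMod.natCast_eq_natCast_iff' _ _ _).mp goalZ
      rwa [Nat.mod_eq_of_lt j.isLt] at this
  -- the diagonal matrix entries
  have term : ∀ i j : Fin N, B.repr (S (B (i, j))) (i, j)
      = if j = js i then ((-1 : k) ^ (i : ℕ)
          * ω ^ ((N - 1) * (i : ℕ) + (N - 1) * ((i : ℕ) * ((i : ℕ) - 1) / 2)
            + (N - 1) * (j : ℕ) * (i : ℕ))) else 0 := by
    intro i j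
    rw [SB i j, map_smul, Finsupp.smul_apply, B.repr_self, Finsupp.single_apply, smul_eq_mul]
    by_cases hc : j = js i
    · rw [if_pos hc, if_pos, mul_one]
      have hcc := (condIff i j).mpr hc
      exact Prod.ext rfl (Fin.ext hcc)
    · rw [if_neg hc, if_neg, mul_zero]
      intro hcon
      apply hc
      apply (condIff i j).mp
      have h2 := congrArg Prod.snd hcon
      exact congrArg Fin.val h2
  -- the coefficient at the diagonal point
  have hinv : (ω ^ h)⁻¹ = ω ^ (h * (N - 1)) := by
    apply inv_eq_of_mul_eq_one_right
    have e : h + h * (N - 1) = N * h := by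
      cases N with
      | zero => omega
      | succ m => simp only [Nat.succ_sub_one]; ring
    rw [← pow_add, e, pow_mul, hωN, one_pow]
  have val : ∀ i : Fin N, ((-1 : k) ^ (i : ℕ)
      * ω ^ ((N - 1) * (i : ℕ) + (N - 1) * ((i : ℕ) * ((i : ℕ) - 1) / 2)
        + (N - 1) * ((js i : Fin N) : ℕ) * (i : ℕ))) = (-(ω ^ h)⁻¹) ^ (i : ℕ) := by
    intro i
    rw [hinv]
    conv_rhs => rw [neg_pow, ← pow_mul]
    congr 1
    have hlei : (i : ℕ) ≤ N := le_of_lt i.isLt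
    have modeq : ((N - 1) * (i : ℕ) + (N - 1) * ((i : ℕ) * ((i : ℕ) - 1) / 2)
        + (N - 1) * ((js i : Fin N) : ℕ) * (i : ℕ)) ≡ (h * (N - 1) * (i : ℕ)) [MOD N] := by
      apply Nat.ModEq.cancel_left_of_coprime (c := 2)
        (by rw [Nat.gcd_comm]; exact Nat.coprime_two_left.mpr hodd)
      have he2 : 2 * ((N - 1) * (i : ℕ) + (N - 1) * ((i : ℕ) * ((i : ℕ) - 1) / 2)
          + (N - 1) * ((js i : Fin N) : ℕ) * (i : ℕ))
          = 2 * ((N - 1) * (i : ℕ)) + (N - 1) * ((i : ℕ) * ((i : ℕ) - 1))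
            + 2 * ((N - 1) * ((js i : Fin N) : ℕ) * (i : ℕ)) := by
        have : 2 * ((N - 1) * ((i : ℕ) * ((i : ℕ) - 1) / 2))
            = (N - 1) * (2 * ((i : ℕ) * ((i : ℕ) - 1) / 2)) := by ring
        rw [Nat.mul_add, Nat.mul_add, this, Nat.mul_div_cancel' (evens (i : ℕ))]
      rw [Nat.ModEq, he2]
      rw [← Nat.ModEq]
      apply (ZMod.natCast_eq_natCast_iff _ _ _).mp
      show _ = (((2 * (h * (N - 1) * (i : ℕ))) : ℕ) : ZMod N)
      rcases Nat.eq_zero_or_pos (i : ℕ) with hi0 | hi1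
      · simp [hjs, hi0]
      · have hjsv : (((js i : Fin N) : ℕ) : ZMod N) = (((N - (i : ℕ)) * h : ℕ) : ZMod N) := by
          show (((N - (i : ℕ)) * h % N : ℕ) : ZMod N) = _
          rw [hmodcast]
        push_cast [Nat.cast_sub hle1, Nat.cast_sub hlei, Nat.cast_sub hi1] at hjsv ⊢
        rw [hjsv, hn0]
        linear_combination ((((i : ℕ) : ZMod N)) ^ 2 + (((i : ℕ) : ZMod N))) * hh2
    rw [ωmod, modeq, ← ωmod]
  -- compute the trace
  have T1 : LinearMap.trace k H S = ∑ i ∈ Finset.range N, (-(ω ^ h)⁻¹) ^ i := by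
    rw [LinearMap.trace_eq_matrix_trace k B]
    rw [show Matrix.trace (LinearMap.toMatrix B B S)
        = ∑ p : Fin N × Fin N, B.repr (S (B p)) p from
      Finset.sum_congr rfl fun p _ => by rw [Matrix.diag_apply, LinearMap.toMatrix_apply]]
    rw [Fintype.sum_prod_type]
    rw [show ∑ i : Fin N, ∑ j : Fin N, B.repr (S (B (i, j))) (i, j)
        = ∑ i : Fin N, (-(ω ^ h)⁻¹) ^ (i : ℕ) from
      Finset.sum_congr rfl fun i _ => by
        rw [show ∑ j : Fin N, B.repr (S (B (i, j))) (i, j)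
            = ∑ j : Fin N, if j = js i then ((-1 : k) ^ (i : ℕ)
              * ω ^ ((N - 1) * (i : ℕ) + (N - 1) * ((i : ℕ) * ((i : ℕ) - 1) / 2)
                + (N - 1) * (j : ℕ) * (i : ℕ))) else 0 from
          Finset.sum_congr rfl fun j _ => term i j]
        rw [Fintype.sum_ite_eq' (js i)]
        exact val i]
    exact Fin.sum_univ_eq_sum_range (fun n => (-(ω ^ h)⁻¹) ^ n) N
  refine ⟨T1, ?_⟩
  rw [T1]
  -- geometric series
  have hξ0 : ω ^ h ≠ 0 := pow_ne_zero _ hω0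
  have hr1 : -(ω ^ h)⁻¹ ≠ 1 := by
    intro hr
    have h1 : (ω ^ h)⁻¹ = -1 := by linear_combination -hr
    have h2 : ω ^ h = -1 := by
      rw [inv_eq_iff_eq_inv] at h1
      rw [h1]
      norm_num
    have h3 : ω ^ (2 * h) = 1 := by
      rw [two_mul, pow_add, h2]
      ring
    rw [h2h, pow_succ, hωN, one_mul] at h3
    exact hω.ne_one hN h3
  have hrN : (-(ω ^ h)⁻¹) ^ N = -1 := by
    rw [neg_pow, inv_pow, ← pow_mul, show h * N = N * h from mul_comm _ _, pow_mul, hωN,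
      one_pow, inv_one, mul_one, Odd.neg_one_pow hodd]
  rw [geom_sum_eq hr1, hrN,
    show -(ω ^ h)⁻¹ - 1 = -(1 + (ω ^ h)⁻¹) by ring,
    show (-1 - 1 : k) = -2 by norm_num, neg_div_neg_eq]
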